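/- Let K be a number field of degree d, S a finite set of prime ideals of O_K, and δ₁,...,δ_r a basis of the S-unit group modulo torsion. Let U be a subset of S ∪ M_K^∞ of size r and let M be the r×r matrix with entries log‖δ_j‖_ν for ν ∈ U, 1 ≤ j ≤ r. Suppose M is invertible and let c be the maximum absolute value of the entries of M^{-1}. If ε = δ₁^{b₁}···δ_r^{b_r} with b₁,...,b_r ∈ ℤ, then max_j |b_j| ≤ 2d·c·h(ε). -/

import Mathlib

open NumberField IsDedekindDomain

/-- The normalized absolute value `‖x‖_ν = |x|_ν^{D_ν}` of `x` at a place `ν` of the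
number field `L`: at an infinite place `w` it is `w(x)^{mult w}`, and at a finite
place `v` (a height-one prime of `𝓞 L`) it is `Norm(𝔭)^{-ord_v x}` (and `0` at `x = 0`). -/
noncomputable def placeNorm (L : Type*) [Field L] [NumberField L] :
    (InfinitePlace L ⊕ HeightOneSpectrum (𝓞 L)) → L → ℝ
  | Sum.inl w => fun x => (w x) ^ w.mult
  | Sum.inr v => fun x =>
      if hx : v.valuation L x = 0 then 0
      else (Ideal.absNorm v.asIdeal : ℝ) ^ (Multiplicative.toAdd (WithZero.unzero hx))

/-- The absolute logarithmic height
`h(x) = (1/[L:ℚ]) ∑_ν log max {1, ‖x‖_ν}`, summing over all places of `L`. -/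
noncomputable def absLogHeight (L : Type*) [Field L] [NumberField L] (x : L) : ℝ :=
  (Module.finrank ℚ L : ℝ)⁻¹ *
    ∑ᶠ ν : InfinitePlace L ⊕ HeightOneSpectrum (𝓞 L),
      Real.log (max 1 (placeNorm L ν x))

section Helpers

open scoped Classical

variable (K : Type*) [Field K] [NumberField K]

lemma absNorm_pos' (v : HeightOneSpectrum (𝓞 K)) : 0 < (Ideal.absNorm v.asIdeal : ℝ) := by
  have : Ideal.absNorm v.asIdeal ≠ 0 := by
    rw [ne_eq, Ideal.absNorm_eq_zero_iff]
    exact v.ne_bot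
  positivity

lemma placeNorm_inl (w : InfinitePlace K) (x : K) :
    placeNorm K (Sum.inl w) x = (w x) ^ w.mult := rfl

lemma placeNorm_inr (v : HeightOneSpectrum (𝓞 K)) {x : K} (hx : v.valuation K x ≠ 0) :
    placeNorm K (Sum.inr v) x
      = (Ideal.absNorm v.asIdeal : ℝ) ^ (Multiplicative.toAdd (WithZero.unzero hx)) :=
  dif_neg hx

lemma placeNorm_zero (ν : InfinitePlace K ⊕ HeightOneSpectrum (𝓞 K)) :
    placeNorm K ν 0 = 0 := by
  cases ν with
  | inl w =>
    rw [placeNorm_inl, map_zero]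
    exact zero_pow w.mult_ne_zero
  | inr v => exact dif_pos (map_zero _)

lemma placeNorm_one (ν : InfinitePlace K ⊕ HeightOneSpectrum (𝓞 K)) :
    placeNorm K ν 1 = 1 := by
  cases ν with
  | inl w => rw [placeNorm_inl, map_one, one_pow]
  | inr v =>
    have h1 : v.valuation K (1 : K) ≠ 0 := by rw [map_one]; exact one_ne_zero
    rw [placeNorm_inr K v h1]
    have : WithZero.unzero h1 = 1 := by
      rw [← WithZero.coe_inj, WithZero.coe_unzero, map_one, WithZero.coe_one]
    rw [this, toAdd_one, zpow_zero]

lemma placeNorm_mul (ν : InfinitePlace K ⊕ HeightOneSpectrum (𝓞 K)) (x y : K) :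
    placeNorm K ν (x * y) = placeNorm K ν x * placeNorm K ν y := by
  by_cases hx : x = 0
  · simp [hx, placeNorm_zero]
  by_cases hy : y = 0
  · simp [hy, placeNorm_zero]
  cases ν with
  | inl w => simp [placeNorm_inl, map_mul, mul_pow]
  | inr v =>
    have hvx : v.valuation K x ≠ 0 := (v.valuation K).ne_zero_iff.mpr hx
    have hvy : v.valuation K y ≠ 0 := (v.valuation K).ne_zero_iff.mpr hy
    have hvxy : v.valuation K (x * y) ≠ 0 := (v.valuation K).ne_zero_iff.mpr (mul_ne_zero hx hy)
    rw [placeNorm_inr K v hvx, placeNorm_inr K v hvy, placeNorm_inr K v hvxy,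
      ← zpow_add₀ (absNorm_pos' K v).ne']
    congr 1
    rw [← toAdd_mul]
    congr 1
    rw [← WithZero.coe_inj, WithZero.coe_unzero, WithZero.coe_mul,
      WithZero.coe_unzero, WithZero.coe_unzero, map_mul]

/-- `placeNorm` as a monoid-with-zero hom. -/
noncomputable def pN (ν : InfinitePlace K ⊕ HeightOneSpectrum (𝓞 K)) : K →*₀ ℝ where
  toFun := placeNorm K ν
  map_zero' := placeNorm_zero K ν
  map_one' := placeNorm_one K ν
  map_mul' := placeNorm_mul K ν

lemma pN_apply (ν) (x : K) : pN K ν x = placeNorm K ν x := rfl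


-- placeNorm at an algebraMap element, in terms of count
lemma placeNorm_algebraMap (v : HeightOneSpectrum (𝓞 K)) (a : 𝓞 K) (ha : a ≠ 0) :
    placeNorm K (Sum.inr v) (algebraMap (𝓞 K) K a)
      = (Ideal.absNorm v.asIdeal : ℝ) ^
          (-((Associates.mk v.asIdeal).count
              (Associates.mk (Ideal.span {a} : Ideal (𝓞 K))).factors : ℤ)) := by
  have hval : v.valuation K (algebraMap (𝓞 K) K a)
      = Multiplicative.ofAdd
          (-((Associates.mk v.asIdeal).count
              (Associates.mk (Ideal.span {a} : Ideal (𝓞 K))).factors : ℤ)) := by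
    rw [HeightOneSpectrum.valuation_of_algebraMap]
    exact v.intValuation_if_neg ha
  have hne : v.valuation K (algebraMap (𝓞 K) K a) ≠ 0 := by
    rw [hval]; exact WithZero.coe_ne_zero
  rw [placeNorm_inr K v hne]
  congr 1
  have : WithZero.unzero hne = Multiplicative.ofAdd
      (-((Associates.mk v.asIdeal).count
          (Associates.mk (Ideal.span {a} : Ideal (𝓞 K))).factors : ℤ)) := by
    rw [← WithZero.coe_inj, WithZero.coe_unzero, hval]
  rw [this, toAdd_ofAdd]

lemma finsum_log_placeNorm_algebraMap (a : 𝓞 K) (ha : a ≠ 0) :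
    ∑ᶠ v : HeightOneSpectrum (𝓞 K), Real.log (placeNorm K (Sum.inr v) (algebraMap (𝓞 K) K a))
      = - Real.log (Ideal.absNorm (Ideal.span {a} : Ideal (𝓞 K)) : ℝ) := by
  set I : Ideal (𝓞 K) := Ideal.span {a} with hIdef
  have hI : I ≠ 0 := by
    simpa only [hIdef, Submodule.zero_eq_bot, ne_eq, Ideal.span_singleton_eq_bot] using ha
  have hfin : (Function.mulSupport fun v : HeightOneSpectrum (𝓞 K) => v.maxPowDividing I).Finite := Ideal.finite_mulSupport hI
  set T := hfin.toFinset with hT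
  set n : HeightOneSpectrum (𝓞 K) → ℕ :=
    fun v => (Associates.mk v.asIdeal).count (Associates.mk I).factors with hn
  have hnT : ∀ v, v ∉ T → n v = 0 := by
    intro v hv
    rw [Set.Finite.mem_toFinset] at hv
    rw [Function.mem_mulSupport, not_not, HeightOneSpectrum.maxPowDividing] at hv
    by_contra hnv
    have h1 : v.asIdeal ^ (n v) ≤ v.asIdeal := Ideal.pow_le_self hnv
    rw [hv] at h1
    have h2 : (⊤ : Ideal (𝓞 K)) ≤ v.asIdeal := by rw [← Ideal.one_eq_top]; exact h1
    exact v.isPrime.ne_top (top_le_iff.mp h2)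
  have habs : (Ideal.absNorm I : ℝ) = ∏ v ∈ T, (Ideal.absNorm v.asIdeal : ℝ) ^ (n v) := by
    have hfact := Ideal.finprod_heightOneSpectrum_factorization hI
    have : I = ∏ v ∈ T, v.asIdeal ^ (n v) := by
      conv_lhs => rw [← hfact]
      exact finprod_eq_prod_of_mulSupport_subset _ (by rw [hT, Set.Finite.coe_toFinset])
    rw [this, map_prod]
    push_cast [map_pow]
    rfl
  have hlogsum : ∑ᶠ v : HeightOneSpectrum (𝓞 K),
      Real.log (placeNorm K (Sum.inr v) (algebraMap (𝓞 K) K a))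
      = ∑ v ∈ T, Real.log (placeNorm K (Sum.inr v) (algebraMap (𝓞 K) K a)) := by
    apply finsum_eq_sum_of_support_subset
    intro v hv
    rw [Function.mem_support] at hv
    by_contra hvT
    apply hv
    rw [placeNorm_algebraMap K v a ha]
    rw [show ((Associates.mk v.asIdeal).count (Associates.mk (Ideal.span {a} : Ideal (𝓞 K))).factors) = n v from rfl,
      hnT v hvT]
    simp
  rw [hlogsum, habs, Real.log_prod (fun v _ => (pow_pos (absNorm_pos' K v) _).ne')]
  rw [← Finset.sum_neg_distrib]
  apply Finset.sum_congr rfl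
  intro v _
  rw [placeNorm_algebraMap K v a ha, Real.log_zpow, Real.log_pow]
  push_cast
  ring

lemma placeNorm_pos (ν : InfinitePlace K ⊕ HeightOneSpectrum (𝓞 K)) {x : K} (hx : x ≠ 0) :
    0 < placeNorm K ν x := by
  cases ν with
  | inl w => exact pow_pos (NumberField.InfinitePlace.pos_iff.mpr hx) _
  | inr v =>
    rw [placeNorm_inr K v ((v.valuation K).ne_zero_iff.mpr hx)]
    exact zpow_pos (absNorm_pos' K v) _

lemma placeNorm_val_one (v : HeightOneSpectrum (𝓞 K)) {x : K} (hv : v.valuation K x = 1) :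
    placeNorm K (Sum.inr v) x = 1 := by
  have hne : v.valuation K x ≠ 0 := by rw [hv]; exact one_ne_zero
  rw [placeNorm_inr K v hne]
  have : WithZero.unzero hne = 1 := by
    rw [← WithZero.coe_inj, WithZero.coe_unzero, hv, WithZero.coe_one]
  rw [this, toAdd_one, zpow_zero]

lemma finite_intVal (r : 𝓞 K) (hr : r ≠ 0) :
    {v : HeightOneSpectrum (𝓞 K) | v.intValuation r ≠ 1}.Finite := by
  have : {v : HeightOneSpectrum (𝓞 K) | v.intValuation r ≠ 1}
      ⊆ {v : HeightOneSpectrum (𝓞 K) | v.asIdeal ∣ Ideal.span {r}} := by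
    intro v hv
    rw [Set.mem_setOf_eq, ← v.intValuation_lt_one_iff_dvd]
    exact lt_of_le_of_ne (v.intValuation_le_one r) hv
  exact Set.Finite.subset (Ideal.finite_factors (by
    simpa only [Submodule.zero_eq_bot, ne_eq, Ideal.span_singleton_eq_bot] using hr)) this

lemma finite_val {x : K} (hx : x ≠ 0) :
    {v : HeightOneSpectrum (𝓞 K) | v.valuation K x ≠ 1}.Finite := by
  obtain ⟨⟨n, d⟩, h⟩ := IsLocalization.surj (nonZeroDivisors (𝓞 K)) x
  have hd0 : (d : 𝓞 K) ≠ 0 := nonZeroDivisors.coe_ne_zero d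
  have hdK : (algebraMap (𝓞 K) K d) ≠ 0 :=
    (map_ne_zero_iff _ (FaithfulSMul.algebraMap_injective (𝓞 K) K)).mpr hd0
  have hn0 : n ≠ 0 := by
    rintro rfl
    rw [map_zero] at h
    rcases mul_eq_zero.mp h with h1 | h2
    · exact hx h1
    · exact hdK h2
  apply Set.Finite.subset ((finite_intVal K n hn0).union (finite_intVal K d hd0))
  intro v hv
  simp only [Set.mem_setOf_eq, Set.mem_union]
  by_contra hcon
  push_neg at hcon
  obtain ⟨h1, h2⟩ := hcon
  apply hv
  have := congrArg (v.valuation K) h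
  rw [map_mul, HeightOneSpectrum.valuation_of_algebraMap,
    HeightOneSpectrum.valuation_of_algebraMap] at this
  rw [h2, mul_one] at this
  rw [this, h1]

lemma support_log_inr {x : K} (hx : x ≠ 0) :
    (Function.support fun v : HeightOneSpectrum (𝓞 K) =>
      Real.log (placeNorm K (Sum.inr v) x)).Finite := by
  apply Set.Finite.subset (finite_val K hx)
  intro v hv
  rw [Function.mem_support] at hv
  rw [Set.mem_setOf_eq]
  intro h1
  exact hv (by rw [placeNorm_val_one K v h1, Real.log_one])

lemma finsum_log_inl {x : K} (hx : x ≠ 0) :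
    ∑ᶠ w : InfinitePlace K, Real.log (placeNorm K (Sum.inl w) x)
      = Real.log ((|Algebra.norm ℚ x| : ℚ) : ℝ) := by
  simp_rw [placeNorm_inl K]
  rw [finsum_eq_sum_of_fintype,
    ← Real.log_prod (fun w _ =>
      (pow_pos (NumberField.InfinitePlace.pos_iff.mpr hx) _).ne')]
  congr 1
  exact_mod_cast NumberField.InfinitePlace.prod_eq_abs_norm x

lemma abs_norm_algebraMap (a : 𝓞 K) :
    ((|Algebra.norm ℚ (algebraMap (𝓞 K) K a)| : ℚ) : ℝ)
      = (Ideal.absNorm (Ideal.span {a} : Ideal (𝓞 K)) : ℝ) := by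
  rw [← Algebra.coe_norm_int, Ideal.absNorm_span_singleton]
  push_cast [Nat.cast_natAbs]
  norm_cast

lemma prod_formula {x : K} (hx : x ≠ 0) :
    (∑ᶠ w : InfinitePlace K, Real.log (placeNorm K (Sum.inl w) x))
    + ∑ᶠ v : HeightOneSpectrum (𝓞 K), Real.log (placeNorm K (Sum.inr v) x) = 0 := by
  obtain ⟨⟨n, d⟩, h⟩ := IsLocalization.surj (nonZeroDivisors (𝓞 K)) x
  have hd0 : (d : 𝓞 K) ≠ 0 := nonZeroDivisors.coe_ne_zero d
  have hdK : (algebraMap (𝓞 K) K d) ≠ 0 :=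
    (map_ne_zero_iff _ (FaithfulSMul.algebraMap_injective (𝓞 K) K)).mpr hd0
  have hn0 : n ≠ 0 := by
    rintro rfl
    rw [map_zero] at h
    rcases mul_eq_zero.mp h with h1 | h2
    · exact hx h1
    · exact hdK h2
  have hnK : (algebraMap (𝓞 K) K n) ≠ 0 :=
    (map_ne_zero_iff _ (FaithfulSMul.algebraMap_injective (𝓞 K) K)).mpr hn0
  -- finite part multiplicativity
  have hG : (∑ᶠ v : HeightOneSpectrum (𝓞 K), Real.log (placeNorm K (Sum.inr v) x))
      + (∑ᶠ v : HeightOneSpectrum (𝓞 K),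
          Real.log (placeNorm K (Sum.inr v) (algebraMap (𝓞 K) K d)))
      = ∑ᶠ v : HeightOneSpectrum (𝓞 K),
          Real.log (placeNorm K (Sum.inr v) (algebraMap (𝓞 K) K n)) := by
    rw [← finsum_add_distrib (support_log_inr K hx) (support_log_inr K hdK)]
    apply finsum_congr
    intro v
    rw [← Real.log_mul (placeNorm_pos K _ hx).ne' (placeNorm_pos K _ hdK).ne',
      ← placeNorm_mul K _ _ _, h]
  -- infinite part multiplicativity
  have hNmul : Real.log ((|Algebra.norm ℚ x| : ℚ) : ℝ)
      + Real.log ((|Algebra.norm ℚ (algebraMap (𝓞 K) K d)| : ℚ) : ℝ)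
      = Real.log ((|Algebra.norm ℚ (algebraMap (𝓞 K) K n)| : ℚ) : ℝ) := by
    rw [← Real.log_mul, ← Rat.cast_mul, ← abs_mul, ← map_mul, h]
    · push_cast
      rw [ne_eq, abs_eq_zero]
      exact_mod_cast Algebra.norm_ne_zero_iff.mpr hx
    · push_cast
      rw [ne_eq, abs_eq_zero]
      exact_mod_cast Algebra.norm_ne_zero_iff.mpr hdK
  rw [finsum_log_inl K hx]
  have e1 := finsum_log_placeNorm_algebraMap K n hn0
  have e2 := finsum_log_placeNorm_algebraMap K d hd0
  have e3 := abs_norm_algebraMap K n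
  have e4 := abs_norm_algebraMap K d
  have := hG
  rw [e1, e2] at this
  linarith [hNmul, this, congrArg Real.log e3, congrArg Real.log e4]

lemma support_sum_finite {f : InfinitePlace K ⊕ HeightOneSpectrum (𝓞 K) → ℝ}
    (h : (Function.support fun v => f (Sum.inr v)).Finite) :
    (Function.support f).Finite := by
  have : Function.support f ⊆
      Set.range (Sum.inl : InfinitePlace K → _) ∪
        Sum.inr '' (Function.support fun v => f (Sum.inr v)) := by
    rintro (w | v) hx
    · exact Or.inl ⟨w, rfl⟩
    · exact Or.inr ⟨v, hx, rfl⟩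
  exact Set.Finite.subset ((Set.finite_range _).union (h.image _)) this

lemma finsum_sum_split (f : InfinitePlace K ⊕ HeightOneSpectrum (𝓞 K) → ℝ)
    (h : (Function.support fun v => f (Sum.inr v)).Finite) :
    ∑ᶠ ν, f ν = (∑ᶠ w : InfinitePlace K, f (Sum.inl w))
      + ∑ᶠ v : HeightOneSpectrum (𝓞 K), f (Sum.inr v) := by
  have hdisj : Disjoint (Set.range (Sum.inl : InfinitePlace K → _))
      (Set.range (Sum.inr : HeightOneSpectrum (𝓞 K) → _)) :=
    Set.isCompl_range_inl_range_inr.disjoint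
  have hunion : (Set.range (Sum.inl : InfinitePlace K → _)) ∪
      Set.range (Sum.inr : HeightOneSpectrum (𝓞 K) → _) = Set.univ :=
    Set.range_inl_union_range_inr
  have h1 : ((Set.range (Sum.inl : InfinitePlace K → _)) ∩ Function.support f).Finite :=
    Set.Finite.inter_of_left (Set.finite_range _) _
  have h2 : ((Set.range (Sum.inr : HeightOneSpectrum (𝓞 K) → _)) ∩ Function.support f).Finite := by
    apply Set.Finite.subset (h.image Sum.inr)
    rintro x ⟨⟨v, rfl⟩, hx⟩
    exact ⟨v, hx, rfl⟩
  rw [← finsum_mem_univ, ← hunion, finsum_mem_union' hdisj h1 h2,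
    finsum_mem_range Sum.inl_injective, finsum_mem_range Sum.inr_injective]

lemma support_logmax {x : K} (hx : x ≠ 0) :
    (Function.support fun ν => Real.log (max 1 (placeNorm K ν x))).Finite := by
  apply support_sum_finite
  apply Set.Finite.subset (finite_val K hx)
  intro v hv
  rw [Function.mem_support] at hv
  rw [Set.mem_setOf_eq]
  intro h1
  exact hv (by rw [placeNorm_val_one K v h1, max_self, Real.log_one])

lemma support_log {x : K} (hx : x ≠ 0) :
    (Function.support fun ν => Real.log (placeNorm K ν x)).Finite :=
  support_sum_finite K (support_log_inr K hx)

lemma full_prod_formula {x : K} (hx : x ≠ 0) :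
    ∑ᶠ ν, Real.log (placeNorm K ν x) = 0 := by
  rw [finsum_sum_split K _ (support_log_inr K hx)]
  exact prod_formula K hx

lemma log_max_inv {t : ℝ} (ht : 0 < t) :
    Real.log (max 1 t⁻¹) = Real.log (max 1 t) - Real.log t := by
  rcases le_total 1 t with h | h
  · rw [max_eq_right h, max_eq_left (inv_le_one_of_one_le₀ h), Real.log_one]
    ring
  · rw [max_eq_left h, max_eq_right (one_le_inv_iff₀.mpr ⟨ht, h⟩), Real.log_inv, Real.log_one]
    ring

lemma abs_log_eq {t : ℝ} (ht : 0 < t) :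
    |Real.log t| = Real.log (max 1 t) + Real.log (max 1 t⁻¹) := by
  rcases le_total 1 t with h | h
  · rw [max_eq_right h, max_eq_left (inv_le_one_of_one_le₀ h), Real.log_one,
      abs_of_nonneg (Real.log_nonneg h), add_zero]
  · rw [max_eq_left h, max_eq_right (one_le_inv_iff₀.mpr ⟨ht, h⟩), Real.log_inv, Real.log_one,
      abs_of_nonpos (Real.log_nonpos ht.le h), zero_add]

lemma height_inv {x : K} (hx : x ≠ 0) :
    ∑ᶠ ν, Real.log (max 1 (placeNorm K ν x⁻¹))
      = ∑ᶠ ν, Real.log (max 1 (placeNorm K ν x)) := by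
  have hpt : ∀ ν, Real.log (max 1 (placeNorm K ν x⁻¹))
      = Real.log (max 1 (placeNorm K ν x)) - Real.log (placeNorm K ν x) := by
    intro ν
    have : placeNorm K ν x⁻¹ = (placeNorm K ν x)⁻¹ := map_inv₀ (pN K ν) x
    rw [this, log_max_inv (placeNorm_pos K ν hx)]
  calc ∑ᶠ ν, Real.log (max 1 (placeNorm K ν x⁻¹))
      = ∑ᶠ ν, (Real.log (max 1 (placeNorm K ν x)) - Real.log (placeNorm K ν x)) :=
        finsum_congr hpt
    _ = (∑ᶠ ν, Real.log (max 1 (placeNorm K ν x))) - ∑ᶠ ν, Real.log (placeNorm K ν x) :=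
        finsum_sub_distrib (support_logmax K hx) (support_log K hx)
    _ = ∑ᶠ ν, Real.log (max 1 (placeNorm K ν x)) := by
        rw [full_prod_formula K hx, sub_zero]

lemma sum_le_finsum' {r : ℕ} {α : Type*} (e : Fin r → α) (he : Function.Injective e)
    (g : α → ℝ) (hg : (Function.support g).Finite) (hnn : ∀ a, 0 ≤ g a) :
    ∑ i, g (e i) ≤ ∑ᶠ a, g a := by
  rw [finsum_eq_sum g hg]
  have h1 : ∑ i, g (e i) = ∑ a ∈ Finset.image e Finset.univ, g a :=
    (Finset.sum_image (fun i _ j _ h => he h)).symm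
  have h2 : ∑ a ∈ Finset.image e Finset.univ, g a
      = ∑ a ∈ (Finset.image e Finset.univ) ∩ hg.toFinset, g a := by
    apply (Finset.sum_subset Finset.inter_subset_left _).symm
    intro a ha hna
    by_contra hga
    exact hna (Finset.mem_inter.mpr ⟨ha, hg.mem_toFinset.mpr hga⟩)
  rw [h1, h2]
  exact Finset.sum_le_sum_of_subset_of_nonneg Finset.inter_subset_right
    (fun a _ _ => hnn a)


end Helpers

/-- Let `δ₁,…,δ_r` be a basis of the `S`-unit group modulo torsion, `U = {ν₁,…,ν_r}`
a set of `r` places contained in `S ∪ M_K^∞`, and `M` the invertible `r×r` matrix with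
entries `log ‖δ_j‖_{ν_i}`. If `c` bounds the absolute values of the entries of `M⁻¹`
and `ε = δ₁^{b₁} ··· δ_r^{b_r}`, then `max_j |b_j| ≤ 2d·c·h(ε)`. -/
theorem exponent_bound_from_height (K : Type*) [Field K] [NumberField K]
    (S : Set (HeightOneSpectrum (𝓞 K))) (r : ℕ) (δ : Fin r → (S.unit K))
    (hδ : ∀ x : (S.unit K), ∃! a : Fin r → ℤ,
      x * (∏ i, δ i ^ a i)⁻¹ ∈ CommGroup.torsion (S.unit K))
    (ν : Fin r → (InfinitePlace K ⊕ HeightOneSpectrum (𝓞 K)))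
    (hνinj : Function.Injective ν)
    (hνS : ∀ i v, ν i = Sum.inr v → v ∈ S)
    (M : Matrix (Fin r) (Fin r) ℝ)
    (hM : ∀ i j, M i j = Real.log (placeNorm K (ν i) (((δ j : Kˣ) : K))))
    (hMinv : IsUnit M.det)
    (c : ℝ) (hc : ∀ i j, |M⁻¹ i j| ≤ c)
    (b : Fin r → ℤ) (ε : K) (hε : ε = ∏ i, (((δ i : Kˣ) : K)) ^ (b i)) :
    ∀ j, |(b j : ℝ)| ≤ 2 * (Module.finrank ℚ K) * c * absLogHeight K ε := by
  intro j
  have hδ0 : ∀ i, (((δ i : Kˣ) : K)) ≠ 0 := fun i => Units.ne_zero _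
  have hε0 : ε ≠ 0 := by
    rw [hε]
    exact Finset.prod_ne_zero_iff.mpr fun i _ => zpow_ne_zero _ (hδ0 i)
  set L : Fin r → ℝ := fun i => Real.log (placeNorm K (ν i) ε) with hL
  have step1 : M.mulVec (fun j => (b j : ℝ)) = L := by
    funext i
    rw [Matrix.mulVec, dotProduct]
    show _ = Real.log (placeNorm K (ν i) ε)
    have hε' : placeNorm K (ν i) ε = ∏ k, (placeNorm K (ν i) ((δ k : Kˣ) : K)) ^ (b k) := by
      rw [hε, show (placeNorm K (ν i) : K → ℝ) = (pN K (ν i) : K → ℝ) from rfl, map_prod]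
      exact Finset.prod_congr rfl fun k _ => map_zpow₀ (pN K (ν i)) _ _
    rw [hε', Real.log_prod
      (fun k _ => (zpow_ne_zero _ (placeNorm_pos K (ν i) (hδ0 k)).ne'))]
    apply Finset.sum_congr rfl
    intro k _
    rw [Real.log_zpow, hM i k]
    ring
  have step2 : (fun j => ((b j : ℝ))) = M⁻¹.mulVec L := by
    rw [← step1, Matrix.mulVec_mulVec, Matrix.nonsing_inv_mul M hMinv, Matrix.one_mulVec]
  have step3 : |(b j : ℝ)| ≤ c * ∑ i, |L i| := by
    have : (b j : ℝ) = ∑ i, M⁻¹ j i * L i := by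
      rw [show ((b j : ℝ)) = (fun j => ((b j : ℝ))) j from rfl, step2]
      rfl
    rw [this, Finset.mul_sum]
    refine le_trans (Finset.abs_sum_le_sum_abs _ _) (Finset.sum_le_sum fun i _ => ?_)
    rw [abs_mul]
    exact mul_le_mul_of_nonneg_right (hc j i) (abs_nonneg _)
  have hg_nonneg : ∀ x : K, ∀ a, (0:ℝ) ≤ Real.log (max 1 (placeNorm K a x)) :=
    fun x a => Real.log_nonneg (le_max_left _ _)
  have step4 : ∑ i, |L i| ≤ 2 * ∑ᶠ a, Real.log (max 1 (placeNorm K a ε)) := by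
    have hpt : ∀ i, |L i| = Real.log (max 1 (placeNorm K (ν i) ε))
        + Real.log (max 1 (placeNorm K (ν i) ε⁻¹)) := by
      intro i
      rw [hL]
      have hinv : placeNorm K (ν i) ε⁻¹ = (placeNorm K (ν i) ε)⁻¹ := map_inv₀ (pN K (ν i)) ε
      rw [hinv]
      exact abs_log_eq (placeNorm_pos K (ν i) hε0)
    rw [Finset.sum_congr rfl fun i _ => hpt i, Finset.sum_add_distrib]
    have b1 := sum_le_finsum' ν hνinj _ (support_logmax K hε0) (hg_nonneg ε)
    have b2 := sum_le_finsum' ν hνinj _ (support_logmax K (inv_ne_zero hε0)) (hg_nonneg ε⁻¹)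
    have := height_inv K hε0
    linarith
  have hd : (0:ℝ) < (Module.finrank ℚ K : ℝ) := by
    exact_mod_cast Module.finrank_pos
  have hH : ∑ᶠ a, Real.log (max 1 (placeNorm K a ε))
      = (Module.finrank ℚ K : ℝ) * absLogHeight K ε := by
    rw [absLogHeight, ← mul_assoc, mul_inv_cancel₀ hd.ne', one_mul]
  have hc0 : 0 ≤ c := le_trans (abs_nonneg _) (hc j j)
  calc |(b j : ℝ)| ≤ c * ∑ i, |L i| := step3
    _ ≤ c * (2 * ∑ᶠ a, Real.log (max 1 (placeNorm K a ε))) :=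
        mul_le_mul_of_nonneg_left step4 hc0
    _ = 2 * (Module.finrank ℚ K) * c * absLogHeight K ε := by rw [hH]; ring
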